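/- Fix λ ∈ (0, 1/2]. For each d ≥ 2 let ψ_d ∈ ℂ^d be a unit vector, ρ_d = |ψ_d⟩⟨ψ_d|, and let M_λ^{(d)} be the binary POVM with elements ((1−2λ)|ψ_d⟩⟨ψ_d| + 2λ(I_d/2), (1−2λ)(I_d−|ψ_d⟩⟨ψ_d|) + 2λ(I_d/2)). Then lim_{d→∞} S_{M_λ^{(d)}}(ρ_d) / log d = 1. Consequently, there is no continuous function f : [0,1] → ℝ with f(0) = 0 such that S_{M_λ^{(d)}}(ρ_d) ≤ f(λ)·log d holds for all d and all λ ∈ (0,1/2]. -/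

import Mathlib

open scoped BigOperators ComplexOrder Classical

noncomputable section

/-- Shannon entropy of a finitely supported distribution, with `0 log 0 = 0`. -/
def shannonEntropy {ι : Type*} [Fintype ι] (p : ι → ℝ) : ℝ :=
  -∑ i, p i * Real.log (p i)

/-- A quantum state: positive semidefinite with unit trace. -/
def IsState {n : Type*} [Fintype n] (ρ : Matrix n n ℂ) : Prop :=
  ρ.PosSemidef ∧ ρ.trace = 1

/-- A POVM: positive semidefinite elements summing to the identity. -/
def IsPOVM {ι n : Type*} [Fintype ι] [Fintype n] [DecidableEq n]
    (M : ι → Matrix n n ℂ) : Prop :=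
  (∀ i, (M i).PosSemidef) ∧ ∑ i, M i = 1

/-- Observational entropy `S_M(ρ) = -∑ p_i log (p_i / V_i)`. -/
def obsEntropy {ι n : Type*} [Fintype ι] [Fintype n]
    (M : ι → Matrix n n ℂ) (ρ : Matrix n n ℂ) : ℝ :=
  -∑ i, ((M i * ρ).trace.re * Real.log ((M i * ρ).trace.re / (M i).trace.re))

/-- The function `g(x) = -x log x + (1+x) log(1+x)`. -/
def gFun (x : ℝ) : ℝ := -(x * Real.log x) + (1 + x) * Real.log (1 + x)

/-- Trace norm of a square complex matrix. -/
def traceNorm {n : Type*} [Fintype n] [DecidableEq n] (X : Matrix n n ℂ) : ℝ :=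
  ((((Matrix.posSemidef_conjTranspose_mul_self X).1.eigenvectorUnitary : Matrix n n ℂ) *
      Matrix.diagonal (fun i =>
        (Real.sqrt ((Matrix.posSemidef_conjTranspose_mul_self X).1.eigenvalues i) : ℂ)) *
      (star ((Matrix.posSemidef_conjTranspose_mul_self X).1.eigenvectorUnitary :
        Matrix n n ℂ)))).trace.re

/-- Matrix logarithm of a Hermitian matrix via the spectral decomposition,
with the convention `log 0 = 0` on the kernel; junk value `0` on non-Hermitian input. -/
def matLog {n : Type*} [Fintype n] [DecidableEq n] (A : Matrix n n ℂ) : Matrix n n ℂ :=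
  if hA : A.IsHermitian then
    (hA.eigenvectorUnitary : Matrix n n ℂ) *
      Matrix.diagonal (fun i => (Real.log (hA.eigenvalues i) : ℂ)) *
      (star (hA.eigenvectorUnitary : Matrix n n ℂ))
  else 0

/-- Von Neumann entropy `S(ρ) = -tr(ρ log ρ)`. -/
def vnEntropy {n : Type*} [Fintype n] [DecidableEq n] (ρ : Matrix n n ℂ) : ℝ :=
  -((ρ * matLog ρ).trace.re)

/-- Quantum relative entropy, as an extended real number: `tr(μ (log μ - log ν))` when
`supp μ ⊆ supp ν` (both Hermitian), and `+∞` otherwise. -/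
def qRelEntropy {n : Type*} [Fintype n] [DecidableEq n] (μ ν : Matrix n n ℂ) : EReal :=
  if μ.IsHermitian ∧ ν.IsHermitian ∧
      LinearMap.range (Matrix.toLin' μ) ≤ LinearMap.range (Matrix.toLin' ν) then
    (((μ * (matLog μ - matLog ν)).trace.re : ℝ) : EReal)
  else ⊤

/-- Real-valued quantum relative entropy `tr(μ (log μ - log ν))` (meaningful when
`supp μ ⊆ supp ν`). -/
def qRelEntropyR {n : Type*} [Fintype n] [DecidableEq n] (μ ν : Matrix n n ℂ) : ℝ :=
  (μ * (matLog μ - matLog ν)).trace.re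


/-- The rank-one projector `|ψ⟩⟨ψ|`. -/
def pureState {d : ℕ} (ψ : Fin d → ℂ) : Matrix (Fin d) (Fin d) ℂ :=
  Matrix.vecMulVec ψ (star ψ)

/-- The binary POVM `((1-2λ)|ψ⟩⟨ψ| + 2λ(I/2), (1-2λ)(I - |ψ⟩⟨ψ|) + 2λ(I/2))`. -/
def binPOVM {d : ℕ} (lam : ℝ) (ψ : Fin d → ℂ) : Fin 2 → Matrix (Fin d) (Fin d) ℂ :=
  ![(1 - 2*lam) • pureState ψ + (2*lam) • ((1/2 : ℝ) • (1 : Matrix (Fin d) (Fin d) ℂ)),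
    (1 - 2*lam) • (1 - pureState ψ) + (2*lam) • ((1/2 : ℝ) • (1 : Matrix (Fin d) (Fin d) ℂ))]

section auxlemmas
open Filter

lemma star_mul_self_eq' (z : ℂ) : star z * z = (Complex.normSq z : ℂ) :=
  mod_cast Complex.normSq_eq_conj_mul_self.symm

lemma trace_pureState {d : ℕ} (ψ : Fin d → ℂ) (hψ : ∑ i, Complex.normSq (ψ i) = 1) :
    (pureState ψ).trace = 1 := by
  simp only [pureState, Matrix.trace, Matrix.diag, Matrix.vecMulVec_apply, Pi.star_apply]
  have : ∀ i, ψ i * star (ψ i) = (Complex.normSq (ψ i) : ℂ) := by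
    intro i; rw [mul_comm]; exact star_mul_self_eq' _
  rw [Finset.sum_congr rfl (fun i _ => this i), ← Complex.ofReal_sum]
  norm_cast

lemma trace_pureState_sq {d : ℕ} (ψ : Fin d → ℂ) (hψ : ∑ i, Complex.normSq (ψ i) = 1) :
    (pureState ψ * pureState ψ).trace = 1 := by
  have hP : pureState ψ * pureState ψ = pureState ψ := by
    ext i j
    simp only [pureState, Matrix.mul_apply, Matrix.vecMulVec_apply, Pi.star_apply]
    have : ∀ k, ψ i * star (ψ k) * (ψ k * star (ψ j)) =
        (Complex.normSq (ψ k) : ℂ) * (ψ i * star (ψ j)) := by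
      intro k; rw [← star_mul_self_eq' (ψ k)]; ring
    rw [Finset.sum_congr rfl (fun k _ => this k), ← Finset.sum_mul, ← Complex.ofReal_sum, hψ]
    simp
  rw [hP, trace_pureState ψ hψ]

lemma p0_eq {d : ℕ} (l : ℝ) (ψ : Fin d → ℂ) (hψ : ∑ i, Complex.normSq (ψ i) = 1) :
    ((binPOVM l ψ 0 * pureState ψ).trace) = ((1 - l : ℝ) : ℂ) := by
  simp only [binPOVM, Matrix.cons_val_zero, add_mul, Matrix.smul_mul, Matrix.one_mul,
    Matrix.trace_add, Matrix.trace_smul, trace_pureState ψ hψ, trace_pureState_sq ψ hψ]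
  simp [Complex.real_smul]; ring

lemma p1_eq {d : ℕ} (l : ℝ) (ψ : Fin d → ℂ) (hψ : ∑ i, Complex.normSq (ψ i) = 1) :
    ((binPOVM l ψ 1 * pureState ψ).trace) = ((l : ℝ) : ℂ) := by
  simp only [binPOVM, Matrix.cons_val_one, Matrix.head_cons, Matrix.cons_val_zero, add_mul, Matrix.smul_mul,
    Matrix.one_mul, sub_mul, Matrix.trace_add, Matrix.trace_smul, Matrix.trace_sub,
    trace_pureState ψ hψ, trace_pureState_sq ψ hψ]
  simp [Complex.real_smul]; ring

lemma V0_eq {d : ℕ} (l : ℝ) (ψ : Fin d → ℂ) (hψ : ∑ i, Complex.normSq (ψ i) = 1) :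
    ((binPOVM l ψ 0).trace) = (((1 - 2*l) + l*d : ℝ) : ℂ) := by
  simp only [binPOVM, Matrix.cons_val_zero, Matrix.trace_add, Matrix.trace_smul,
    trace_pureState ψ hψ, Matrix.trace_one]
  simp [Complex.real_smul]; push_cast; ring

lemma V1_eq {d : ℕ} (l : ℝ) (ψ : Fin d → ℂ) (hψ : ∑ i, Complex.normSq (ψ i) = 1) :
    ((binPOVM l ψ 1).trace) = ((-(1 - 2*l) + (1-l)*d : ℝ) : ℂ) := by
  simp only [binPOVM, Matrix.cons_val_one, Matrix.head_cons, Matrix.cons_val_zero, Matrix.trace_add,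
    Matrix.trace_smul, Matrix.trace_sub, trace_pureState ψ hψ, Matrix.trace_one]
  simp [Complex.real_smul]; push_cast; ring

lemma obsEntropy_eq {d : ℕ} (l : ℝ) (ψ : Fin d → ℂ)
    (hψ : ∑ i, Complex.normSq (ψ i) = 1) :
    obsEntropy (binPOVM l ψ) (pureState ψ) =
      -((1-l) * Real.log ((1-l) / ((1 - 2*l) + l*d)) +
        l * Real.log (l / (-(1 - 2*l) + (1-l)*d))) := by
  rw [obsEntropy, Fin.sum_univ_two, p0_eq l ψ hψ, p1_eq l ψ hψ, V0_eq l ψ hψ, V1_eq l ψ hψ]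
  simp [Complex.ofReal_re]

lemma logLimit (a b : ℝ) (hb : 0 < b) :
    Tendsto (fun d : ℕ => Real.log (a + b * d) / Real.log d) atTop (nhds 1) := by
  have hd : ∀ᶠ d : ℕ in atTop, (|a| / b + 1 : ℝ) ≤ d ∧ (2 : ℝ) ≤ d := by
    filter_upwards [eventually_ge_atTop (⌈|a| / b + 1⌉₊ + 2)] with d hd
    have h1 : ((⌈|a| / b + 1⌉₊ : ℝ) ≤ d) := by exact_mod_cast le_trans (by omega) hd
    exact ⟨le_trans (Nat.le_ceil _) h1, by exact_mod_cast le_trans (by omega) hd⟩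
  have key : ∀ᶠ d : ℕ in atTop,
      Real.log (a + b * d) / Real.log d = 1 + Real.log (b + a / d) / Real.log d := by
    filter_upwards [hd] with d ⟨h1, h2⟩
    have hdpos : (0 : ℝ) < d := by linarith
    have hblt : |a| < b * d := by
      have h3 := mul_le_mul_of_nonneg_left h1 hb.le
      have h4 : b * (|a| / b + 1) = |a| + b := by field_simp
      nlinarith
    have hba : 0 < b + a / d := by
      have h5 : 0 < (b * d + a) / d := div_pos (by nlinarith [neg_abs_le a]) hdpos
      have : b + a / d = (b * d + a) / d := by field_simp
      linarith [this ▸ h5]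
    have heq : a + b * d = d * (b + a / d) := by field_simp; ring
    have hlog1 : Real.log d ≠ 0 := by
      have := Real.log_pos (by linarith : (1:ℝ) < d); linarith
    rw [heq, Real.log_mul (by positivity) (by positivity), add_div, div_self hlog1]
  rw [tendsto_congr' key]
  have h_num : Tendsto (fun d : ℕ => Real.log (b + a / d)) atTop (nhds (Real.log b)) := by
    have h0 : Tendsto (fun d : ℕ => b + a / d) atTop (nhds (b + 0)) :=
      tendsto_const_nhds.add (tendsto_const_div_atTop_nhds_zero_nat a)
    rw [add_zero] at h0
    exact ((Real.continuousAt_log (ne_of_gt hb)).tendsto).comp h0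
  have h_den : Tendsto (fun d : ℕ => Real.log d) atTop atTop :=
    Real.tendsto_log_atTop.comp tendsto_natCast_atTop_atTop
  simpa using tendsto_const_nhds.add (h_num.div_atTop h_den)

lemma main_limit (ψ : (d : ℕ) → Fin d → ℂ)
    (hψ : ∀ d, 2 ≤ d → ∑ i, Complex.normSq (ψ d i) = 1)
    (l : ℝ) (hl : l ∈ Set.Ioc (0 : ℝ) (1/2)) :
    Tendsto (fun d : ℕ => obsEntropy (binPOVM l (ψ d)) (pureState (ψ d)) / Real.log d)
      atTop (nhds 1) := by
  obtain ⟨hl0, hl2⟩ := hl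
  have hl1 : 0 < 1 - l := by linarith
  have h_den : Tendsto (fun d : ℕ => Real.log d) atTop atTop :=
    Real.tendsto_log_atTop.comp tendsto_natCast_atTop_atTop
  have h0 := logLimit (1 - 2*l) l hl0
  have h1 := logLimit (-(1 - 2*l)) (1 - l) hl1
  have hinv : Tendsto (fun d : ℕ => (Real.log d)⁻¹) atTop (nhds 0) :=
    tendsto_inv_atTop_zero.comp h_den
  have hG : Tendsto (fun d : ℕ =>
      (1-l) * (Real.log ((1 - 2*l) + l * d) / Real.log d) +
      l * (Real.log (-(1 - 2*l) + (1-l) * d) / Real.log d) -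
      ((1-l) * Real.log (1-l) + l * Real.log l) * (Real.log d)⁻¹)
      atTop (nhds ((1-l) * 1 + l * 1 - ((1-l) * Real.log (1-l) + l * Real.log l) * 0)) :=
    ((tendsto_const_nhds.mul h0).add (tendsto_const_nhds.mul h1)).sub
      (tendsto_const_nhds.mul hinv)
  have hval : (1-l) * 1 + l * 1 - ((1-l) * Real.log (1-l) + l * Real.log l) * 0 = 1 := by ring
  rw [hval] at hG
  refine Tendsto.congr' ?_ hG
  filter_upwards [eventually_ge_atTop 2] with d hd2
  have hdR : (2 : ℝ) ≤ d := by exact_mod_cast hd2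
  have hV0 : (0:ℝ) < (1 - 2*l) + l * d := by nlinarith
  have hV1 : (0:ℝ) < -(1 - 2*l) + (1-l) * d := by nlinarith
  rw [obsEntropy_eq l (ψ d) (hψ d hd2),
    Real.log_div (by linarith) (ne_of_gt hV0),
    Real.log_div (ne_of_gt hl0) (ne_of_gt hV1)]
  ring

end auxlemmas

theorem obsEntropy_no_measurement_asymptotic_bound
    (ψ : (d : ℕ) → Fin d → ℂ) (hψ : ∀ d, 2 ≤ d → ∑ i, Complex.normSq (ψ d i) = 1)
    (lam : ℝ) (hlam : lam ∈ Set.Ioc (0 : ℝ) (1/2)) :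
    Filter.Tendsto
        (fun d : ℕ => obsEntropy (binPOVM lam (ψ d)) (pureState (ψ d)) / Real.log d)
        Filter.atTop (nhds 1) ∧
      ¬ ∃ f : ℝ → ℝ, Continuous f ∧ f 0 = 0 ∧
        ∀ d : ℕ, 2 ≤ d → ∀ l ∈ Set.Ioc (0 : ℝ) (1/2),
          obsEntropy (binPOVM l (ψ d)) (pureState (ψ d)) ≤ f l * Real.log d := by
  constructor
  · exact main_limit ψ hψ lam hlam
  · rintro ⟨f, hfc, hf0, hbd⟩
    have hcont : Filter.Tendsto f (nhds 0) (nhds 0) := by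
      have := hfc.tendsto 0; rwa [hf0] at this
    have hev : ∀ᶠ x in nhds (0:ℝ), f x < 1/2 :=
      hcont.eventually (gt_mem_nhds (by norm_num))
    rw [Metric.eventually_nhds_iff] at hev
    obtain ⟨ε, hε, hball⟩ := hev
    set l₀ : ℝ := min (ε/2) (1/2) with hl₀def
    have hl₀ : l₀ ∈ Set.Ioc (0:ℝ) (1/2) :=
      ⟨lt_min (by linarith) (by norm_num), min_le_right _ _⟩
    have hfl₀ : f l₀ < 1/2 := by
      apply hball
      rw [Real.dist_eq, sub_zero, abs_of_pos hl₀.1]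
      calc l₀ ≤ ε/2 := min_le_left _ _
        _ < ε := by linarith
    have hlim := main_limit ψ hψ l₀ hl₀
    have hev2 : ∀ᶠ d : ℕ in Filter.atTop, (3/4 : ℝ) <
        obsEntropy (binPOVM l₀ (ψ d)) (pureState (ψ d)) / Real.log d :=
      hlim.eventually (lt_mem_nhds (by norm_num))
    obtain ⟨d, hd2, hd3⟩ := ((Filter.eventually_ge_atTop 2).and hev2).exists
    have hd1 : (1:ℝ) < d := by exact_mod_cast Nat.lt_of_lt_of_le one_lt_two hd2
    have hlogd : 0 < Real.log d := Real.log_pos hd1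
    have hS := hbd d hd2 l₀ hl₀
    have hle : obsEntropy (binPOVM l₀ (ψ d)) (pureState (ψ d)) / Real.log d ≤ f l₀ := by
      rw [div_le_iff₀ hlogd]; exact hS
    linarith
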